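/- Fix a power of two n, a power of two B dividing n, a parameter δ ∈ (0, 1/20), a parameter F' ≥ 10 log₂(1/δ), a signal Y ∈ ℂ^n, and an (n,B,F')-flat filter H. Let σ be uniform over the odd numbers in [n] and Δ uniform over [n], independently, and let U be the (n,B,H,σ,Δ)-hashing of Y, with Fourier transform Û. Then E_{σ,Δ}[ Σ_{b∈[B]} |Û_b|² ] ≤ 3·‖Ŷ‖₂². -/

import Mathlib

open Finset

/-- Discrete Fourier transform of a length-`n` signal, with `1/n` normalization. -/
noncomputable def dft (n : ℕ) [NeZero n] (X : ZMod n → ℂ) : ZMod n → ℂ :=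
  fun f => (n : ℂ)⁻¹ * ∑ t : ZMod n, X t *
    Complex.exp (-(2 * Real.pi * Complex.I) * ((f * t).val : ℂ) / (n : ℂ))

/-- Circular (modulo-`n`) distance of an index to `0`. -/
def cdist (n : ℕ) (x : ZMod n) : ℕ := min x.val (n - x.val)

/-- The (real) Fourier transform of a real-valued filter. -/
noncomputable def fhat (n : ℕ) [NeZero n] (G : ZMod n → ℝ) (f : ZMod n) : ℝ :=
  (dft n (fun t => ((G t : ℝ) : ℂ)) f).re

/-- `G` is an `(n,B,F)`-flat filter. -/
structure IsFlatFilter (n B F : ℕ) [NeZero n] (G : ZMod n → ℝ) : Prop where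
  realFT : ∀ f, (dft n (fun t => ((G t : ℝ) : ℂ)) f).im = 0
  symm : ∀ f, fhat n G (-f) = fhat n G f
  nonneg : ∀ f, 0 ≤ fhat n G f
  le_one : ∀ f, fhat n G f ≤ 1
  pass : ∀ f : ZMod n, (cdist n f : ℝ) ≤ (n : ℝ) / (2 * B) →
    1 - (1 / 4 : ℝ) ^ (F - 1) ≤ fhat n G f
  decay : ∀ f : ZMod n, (n : ℝ) / B ≤ (cdist n f : ℝ) →
    fhat n G f ≤ (1 / 4 : ℝ) ^ (F - 1) * ((n : ℝ) / (B * cdist n f)) ^ (F - 1)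

/-- The `(n,B,G,σ,Δ)`-hashing of `X`:
`U_j = (B/n) ∑_{i ∈ [n/B]} X_{σ(Δ+j+B·i)} G_{j+B·i}` for `j ∈ [B]`. -/
noncomputable def hashing (n B : ℕ) [NeZero (n / B)] (X G : ZMod n → ℂ)
    (σ Δ : ZMod n) : ZMod B → ℂ :=
  fun j => (B : ℂ) / (n : ℂ) * ∑ i : ZMod (n / B),
    X (σ * (Δ + (j.val : ZMod n) + (B : ZMod n) * (i.val : ZMod n))) *
      G ((j.val : ZMod n) + (B : ZMod n) * (i.val : ZMod n))

/-- The odd elements of `[n]` (values of the random variable `σ`). -/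
def odds (n : ℕ) [NeZero n] : Finset (ZMod n) :=
  Finset.univ.filter (fun σ : ZMod n => σ.val % 2 = 1)


set_option linter.unusedSectionVars false

namespace EH

noncomputable def zeta (n : ℕ) : ℂ := Complex.exp (-(2 * Real.pi * Complex.I) / n)

noncomputable def chr (n : ℕ) [NeZero n] (x : ZMod n) : ℂ := zeta n ^ x.val

variable (n : ℕ) [NeZero n]

lemma zeta_ne_zero : zeta n ≠ 0 := Complex.exp_ne_zero _

lemma zeta_pow_n : zeta n ^ n = 1 := by
  rw [zeta, ← Complex.exp_nat_mul]
  have hn : (n : ℂ) ≠ 0 := Nat.cast_ne_zero.2 (NeZero.ne n)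
  rw [mul_div_cancel₀ _ hn]
  rw [Complex.exp_eq_one_iff]
  exact ⟨-1, by push_cast; ring⟩

lemma zeta_pow_mod (v : ℕ) : zeta n ^ v = zeta n ^ (v % n) := by
  conv_lhs => rw [← Nat.mod_add_div v n, pow_add, pow_mul, zeta_pow_n, one_pow, mul_one]

lemma zeta_pow_eq_one_iff (m : ℕ) : zeta n ^ m = 1 ↔ n ∣ m := by
  constructor
  · intro h
    rw [zeta, ← Complex.exp_nat_mul, Complex.exp_eq_one_iff] at h
    obtain ⟨k, hk⟩ := h
    have hn : (n : ℂ) ≠ 0 := Nat.cast_ne_zero.2 (NeZero.ne n)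
    have hpi : (2 * (Real.pi : ℂ) * Complex.I) ≠ 0 := by
      simp [Complex.ofReal_ne_zero, Real.pi_ne_zero, Complex.I_ne_zero]
    have hkk : (↑m * (2 * (Real.pi:ℂ) * Complex.I) / ↑n) = -(↑k * (2 * ↑Real.pi * Complex.I)) := by
      rw [← hk]; ring
    rw [div_eq_iff hn] at hkk
    have h2 : (m : ℂ) = (-k) * n :=
      mul_right_cancel₀ hpi (by linear_combination hkk)
    have h3 : (m : ℤ) = (-k) * n := by exact_mod_cast h2
    have h4 : (n : ℤ) ∣ (m : ℤ) := ⟨-k, by linarith⟩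
    exact_mod_cast h4
  · rintro ⟨c, rfl⟩
    rw [pow_mul, zeta_pow_n, one_pow]

lemma chr_natCast (v : ℕ) : chr n (v : ZMod n) = zeta n ^ v := by
  rw [chr, ZMod.val_natCast, ← zeta_pow_mod]

lemma chr_add (x y : ZMod n) : chr n (x + y) = chr n x * chr n y := by
  have hx : ((x.val : ℕ) : ZMod n) = x := ZMod.natCast_rightInverse x
  have hy : ((y.val : ℕ) : ZMod n) = y := ZMod.natCast_rightInverse y
  rw [← hx, ← hy, ← Nat.cast_add, chr_natCast, chr_natCast, chr_natCast, pow_add]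

lemma chr_zero : chr n 0 = 1 := by simp [chr, ZMod.val_zero]

lemma chr_ne_zero (x : ZMod n) : chr n x ≠ 0 := pow_ne_zero _ (zeta_ne_zero n)

lemma chr_neg (x : ZMod n) : chr n (-x) = (chr n x)⁻¹ :=
  eq_inv_of_mul_eq_one_left (by rw [← chr_add, neg_add_cancel, chr_zero])

lemma abs_chr (x : ZMod n) : ‖chr n x‖ = 1 := by
  rw [chr, norm_pow, zeta, Complex.norm_exp]
  have : (-(2 * (Real.pi:ℂ) * Complex.I) / n).re = 0 := by
    simp [Complex.div_re]
  rw [this, Real.exp_zero, one_pow]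

lemma conj_chr (x : ZMod n) : (starRingEnd ℂ) (chr n x) = (chr n x)⁻¹ :=
  (Complex.inv_eq_conj (by rw [abs_chr])).symm

lemma sum_univ_zmod {M : Type*} [AddCommMonoid M] (h : ZMod n → M) :
    ∑ x : ZMod n, h x = ∑ k ∈ range n, h (k : ZMod n) :=
  Finset.sum_nbij' (i := fun x : ZMod n => x.val) (j := fun k : ℕ => (k : ZMod n))
    (fun x _ => mem_range.2 (ZMod.val_lt x)) (fun k _ => mem_univ _)
    (fun x _ => ZMod.natCast_rightInverse x)
    (fun k hk => ZMod.val_cast_of_lt (mem_range.1 hk))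
    (fun x _ => by rw [ZMod.natCast_rightInverse x])

lemma sum_chr (a : ZMod n) : ∑ d : ZMod n, chr n (a * d) = if a = 0 then (n : ℂ) else 0 := by
  rw [sum_univ_zmod]
  have key : ∀ k : ℕ, chr n (a * (k : ZMod n)) = (zeta n ^ a.val) ^ k := by
    intro k
    have h1 : a * (k : ZMod n) = ((a.val * k : ℕ) : ZMod n) := by
      push_cast [ZMod.natCast_rightInverse a]; ring
    rw [h1, chr_natCast, pow_mul]
  simp_rw [key]
  split_ifs with h
  · subst h; simp [ZMod.val_zero]
  · have hne : zeta n ^ a.val ≠ 1 := by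
      intro h1
      rw [zeta_pow_eq_one_iff] at h1
      exact h (by rw [← ZMod.natCast_rightInverse a]; exact (ZMod.natCast_eq_zero_iff _ _).2 h1)
    rw [geom_sum_eq hne, ← pow_mul, mul_comm a.val n, pow_mul, zeta_pow_n, one_pow]
    simp

lemma sum_chr_right (a : ZMod n) : ∑ f : ZMod n, chr n (f * a) = if a = 0 then (n : ℂ) else 0 := by
  simp_rw [mul_comm]; exact sum_chr n a


lemma exp_eq_chr (x : ZMod n) :
    Complex.exp (-(2 * Real.pi * Complex.I) * ((x.val : ℕ) : ℂ) / (n : ℂ)) = chr n x := by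
  rw [chr, zeta, ← Complex.exp_nat_mul]
  congr 1
  ring

lemma dft_eq (X : ZMod n → ℂ) (f : ZMod n) :
    dft n X f = (n : ℂ)⁻¹ * ∑ t : ZMod n, X t * chr n (f * t) := by
  unfold dft
  congr 1
  exact Finset.sum_congr rfl fun t _ => by rw [exp_eq_chr]

lemma dft_inv (X : ZMod n → ℂ) (s : ZMod n) :
    X s = ∑ f : ZMod n, dft n X f * (chr n (f * s))⁻¹ := by
  have hn : (n : ℂ) ≠ 0 := Nat.cast_ne_zero.2 (NeZero.ne n)
  have step1 : ∀ f : ZMod n, dft n X f * (chr n (f * s))⁻¹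
      = (n : ℂ)⁻¹ * ∑ t : ZMod n, X t * chr n ((t - s) * f) := by
    intro f
    rw [dft_eq, mul_assoc, Finset.sum_mul]
    congr 1
    refine Finset.sum_congr rfl fun t _ => ?_
    have : (t - s) * f = f * t + -(f * s) := by ring
    rw [this, chr_add, chr_neg, mul_assoc]
  symm
  calc ∑ f : ZMod n, dft n X f * (chr n (f * s))⁻¹
      = (n : ℂ)⁻¹ * ∑ f : ZMod n, ∑ t : ZMod n, X t * chr n ((t - s) * f) := by
        rw [Finset.mul_sum]; exact Finset.sum_congr rfl fun f _ => step1 f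
    _ = (n : ℂ)⁻¹ * ∑ t : ZMod n, X t * ∑ f : ZMod n, chr n ((t - s) * f) := by
        rw [Finset.sum_comm]
        congr 1
        exact Finset.sum_congr rfl fun t _ => by rw [Finset.mul_sum]
    _ = (n : ℂ)⁻¹ * ∑ t : ZMod n, X t * (if t = s then (n : ℂ) else 0) := by
        congr 1
        refine Finset.sum_congr rfl fun t _ => ?_
        rw [sum_chr n (t - s)]
        congr 1
        simp [sub_eq_zero]
    _ = X s := by
        rw [Finset.sum_eq_single s (by intro b _ hb; simp [hb]) (by simp)]
        simp
        field_simp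


section
variable (n B : ℕ) [NeZero n] [NeZero B] [NeZero (n/B)]

lemma zeta_B_eq (hBn : B ∣ n) : zeta B = zeta n ^ (n / B) := by
  rw [zeta, zeta, ← Complex.exp_nat_mul]
  congr 1
  have hq : (n : ℂ) = (B : ℂ) * ((n / B : ℕ) : ℂ) := by
    rw [← Nat.cast_mul, Nat.mul_div_cancel' hBn]
  have hB : (B : ℂ) ≠ 0 := Nat.cast_ne_zero.2 (NeZero.ne B)
  have hn : (n : ℂ) ≠ 0 := Nat.cast_ne_zero.2 (NeZero.ne n)
  have key : ((n / B : ℕ) : ℂ) = (n : ℂ) / (B : ℂ) := by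
    rw [hq, mul_comm, mul_div_assoc, div_self hB, mul_one]
  rw [key, div_mul_div_comm, div_eq_div_iff hB (mul_ne_zero hB hn)]
  ring

/-- the index `j + B·i` as an element of `ZMod n` -/
def emap (p : ZMod B × ZMod (n / B)) : ZMod n := ((p.1.val + B * p.2.val : ℕ) : ZMod n)

lemma emap_lt (hBn : B ∣ n) (p : ZMod B × ZMod (n / B)) : p.1.val + B * p.2.val < n := by
  have h1 : p.1.val < B := ZMod.val_lt p.1
  have h2 : p.2.val < n / B := ZMod.val_lt p.2
  have h3 : n / B * B = n := Nat.div_mul_cancel hBn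
  nlinarith [Nat.succ_le_of_lt h2]

lemma emap_bij (hBn : B ∣ n) : Function.Bijective (emap n B) := by
  rw [Fintype.bijective_iff_injective_and_card]
  constructor
  · rintro ⟨j, i⟩ ⟨j', i'⟩ h
    unfold emap at h
    have h1 := ZMod.val_cast_of_lt (emap_lt n B hBn ⟨j, i⟩)
    have h2 := ZMod.val_cast_of_lt (emap_lt n B hBn ⟨j', i'⟩)
    have h3 : j.val + B * i.val = j'.val + B * i'.val := by
      rw [← h1, ← h2, h]
    have hj : j.val < B := ZMod.val_lt j
    have hj' : j'.val < B := ZMod.val_lt j'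
    have hB0 : 0 < B := Nat.pos_of_ne_zero (NeZero.ne B)
    have hjv : j.val = j'.val := by
      have hm := congrArg (· % B) h3
      simpa [Nat.add_mul_mod_self_left, Nat.mod_eq_of_lt hj, Nat.mod_eq_of_lt hj'] using hm
    have hiv : i.val = i'.val := by
      have hd := congrArg (· / B) h3
      simpa [Nat.add_mul_div_left _ _ hB0, Nat.div_eq_of_lt hj, Nat.div_eq_of_lt hj'] using hd
    have e1 : j = j' := by rw [← ZMod.natCast_rightInverse j, ← ZMod.natCast_rightInverse j', hjv]
    have e2 : i = i' := by rw [← ZMod.natCast_rightInverse i, ← ZMod.natCast_rightInverse i', hiv]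
    rw [e1, e2]
  · rw [Fintype.card_prod, ZMod.card, ZMod.card, ZMod.card, Nat.mul_div_cancel' hBn]

lemma chrB_eq (hBn : B ∣ n) (b j : ZMod B) (i : ZMod (n / B)) :
    chr B (b * j) = chr n ((((n / B : ℕ) : ZMod n) * ((b.val : ℕ) : ZMod n)) * emap n B (j, i)) := by
  have h1 : b * j = ((b.val * j.val : ℕ) : ZMod B) := by
    push_cast [ZMod.natCast_rightInverse b, ZMod.natCast_rightInverse j]; ring
  have h2 : (((n / B : ℕ) : ZMod n) * ((b.val : ℕ) : ZMod n)) * emap n B (j, i)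
      = (((n / B) * b.val * (j.val + B * i.val) : ℕ) : ZMod n) := by
    unfold emap; push_cast; ring
  have expand : (n / B) * b.val * (j.val + B * i.val)
      = (n / B) * (b.val * j.val) + n * (b.val * i.val) := by
    have h3 : B * (n / B) = n := Nat.mul_div_cancel' hBn
    calc (n / B) * b.val * (j.val + B * i.val)
        = (n / B) * (b.val * j.val) + (B * (n / B)) * (b.val * i.val) := by ring
      _ = (n / B) * (b.val * j.val) + n * (b.val * i.val) := by rw [h3]
  rw [h1, h2, chr_natCast, chr_natCast, expand, zeta_B_eq n B hBn, pow_add]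
  have e1 : zeta n ^ (n * (b.val * i.val)) = 1 := by rw [pow_mul, zeta_pow_n, one_pow]
  have e2 : zeta n ^ (n / B * (b.val * j.val)) = (zeta n ^ (n / B)) ^ (b.val * j.val) :=
    pow_mul _ _ _
  rw [e1, e2, mul_one, pow_mul]

lemma hash_dft (hBn : B ∣ n) (Y G' : ZMod n → ℂ) (σ Δ : ZMod n) (b : ZMod B) :
    dft B (hashing n B Y G' σ Δ) b
      = (n : ℂ)⁻¹ * ∑ t : ZMod n, Y (σ * (Δ + t)) * G' t
          * chr n ((((n / B : ℕ) : ZMod n) * ((b.val : ℕ) : ZMod n)) * t) := by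
  set mb : ZMod n := (((n / B : ℕ) : ZMod n) * ((b.val : ℕ) : ZMod n)) with hmb
  rw [dft_eq]
  unfold hashing
  have hB : (B : ℂ) ≠ 0 := Nat.cast_ne_zero.2 (NeZero.ne B)
  have hn : (n : ℂ) ≠ 0 := Nat.cast_ne_zero.2 (NeZero.ne n)
  have step : ∀ j : ZMod B,
      ((B : ℂ) / (n : ℂ) * ∑ i : ZMod (n / B),
        Y (σ * (Δ + (j.val : ZMod n) + (B : ZMod n) * (i.val : ZMod n))) *
          G' ((j.val : ZMod n) + (B : ZMod n) * (i.val : ZMod n))) * chr B (b * j)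
      = (B : ℂ) / (n : ℂ) * ∑ i : ZMod (n / B),
          Y (σ * (Δ + emap n B (j, i))) * G' (emap n B (j, i)) * chr n (mb * emap n B (j, i)) := by
    intro j
    rw [mul_assoc, Finset.sum_mul]
    congr 1
    refine Finset.sum_congr rfl fun i _ => ?_
    have hY : Δ + (j.val : ZMod n) + (B : ZMod n) * (i.val : ZMod n) = Δ + emap n B (j, i) := by
      unfold emap; push_cast; ring
    have he : (j.val : ZMod n) + (B : ZMod n) * (i.val : ZMod n) = emap n B (j, i) := by
      unfold emap; push_cast; ring
    rw [hY, he, chrB_eq n B hBn b j i, ← hmb]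
  calc (B : ℂ)⁻¹ * ∑ j : ZMod B, ((B : ℂ) / (n : ℂ) * ∑ i : ZMod (n / B),
        Y (σ * (Δ + (j.val : ZMod n) + (B : ZMod n) * (i.val : ZMod n))) *
          G' ((j.val : ZMod n) + (B : ZMod n) * (i.val : ZMod n))) * chr B (b * j)
      = (B : ℂ)⁻¹ * ∑ j : ZMod B, ((B : ℂ) / (n : ℂ) * ∑ i : ZMod (n / B),
          Y (σ * (Δ + emap n B (j, i))) * G' (emap n B (j, i)) * chr n (mb * emap n B (j, i))) := by
        congr 1
        exact Finset.sum_congr rfl fun j _ => step j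
    _ = ((B : ℂ)⁻¹ * ((B : ℂ) / (n : ℂ))) * ∑ j : ZMod B, ∑ i : ZMod (n / B),
          Y (σ * (Δ + emap n B (j, i))) * G' (emap n B (j, i)) * chr n (mb * emap n B (j, i)) := by
        rw [← Finset.mul_sum, mul_assoc]
    _ = (n : ℂ)⁻¹ * ∑ t : ZMod n, Y (σ * (Δ + t)) * G' t * chr n (mb * t) := by
        congr 1
        · field_simp
        · rw [← Function.Bijective.sum_comp (emap_bij n B hBn)
            (fun t => Y (σ * (Δ + t)) * G' t * chr n (mb * t)), Fintype.sum_prod_type]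
end

noncomputable def ff : ℕ → ℝ := fun m => if m = 0 then 1 else 1 / (16 * m ^ 2)

lemma ff_nonneg (m : ℕ) : 0 ≤ ff m := by
  unfold ff; split_ifs <;> positivity

lemma ff_sum_le (N : ℕ) : ∑ k ∈ range N, ff k ≤ 9 / 8 := by
  have key : ∀ M : ℕ, ∑ k ∈ range (M + 2), ff k ≤ 9 / 8 - 1 / (16 * (M + 1)) := by
    intro M
    induction M with
    | zero => norm_num [ff, Finset.sum_range_succ]
    | succ m ih =>
      rw [Finset.sum_range_succ]
      have hm : ff (m + 2) = 1 / (16 * ((m:ℝ) + 2) ^ 2) := by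
        unfold ff
        rw [if_neg (by omega)]
        push_cast; ring_nf
      have hb : (1 : ℝ) / (16 * ((m:ℝ) + 2) ^ 2) ≤ 1 / (16 * ((m:ℝ)+1)) - 1 / (16 * ((m:ℝ)+2)) := by
        rw [div_sub_div _ _ (by positivity) (by positivity)]
        rw [div_le_div_iff₀ (by positivity) (by positivity)]
        nlinarith [sq_nonneg ((m:ℝ)+1)]
      have hc : ((m+1:ℕ):ℝ) + 1 = (m:ℝ) + 2 := by push_cast; ring
      rw [hm, hc]
      linarith
  match N with
  | 0 => norm_num
  | 1 => norm_num [ff]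
  | (M + 2) =>
    have h1 := key M
    have h2 : (0:ℝ) < 1 / (16 * ((M:ℝ) + 1)) := by positivity
    linarith

section
variable (n B F' : ℕ) [NeZero n] [NeZero B] [NeZero (n/B)]

set_option maxHeartbeats 1000000 in
lemma fhat_index_le (hBn : B ∣ n) (hF2 : 2 ≤ F') (H : ZMod n → ℝ)
    (hH : IsFlatFilter n B F' H) (r k : ℕ) (hr : r < n / B) (hk : k < B) :
    (fhat n H (((n / B) * k + r : ℕ) : ZMod n)) ^ 2 ≤ ff k + ff (B - 1 - k) := by
  have hq : B * (n / B) = n := Nat.mul_div_cancel' hBn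
  set q := n / B with hqdef
  have hq0 : 0 < q := Nat.pos_of_ne_zero (NeZero.ne (n/B))
  have hlt : q * k + r < n := by nlinarith
  set y : ZMod n := ((q * k + r : ℕ) : ZMod n) with hy
  have hval : y.val = q * k + r := ZMod.val_cast_of_lt hlt
  have hcd : cdist n y = min (q * k + r) (n - (q * k + r)) := by rw [cdist, hval]
  set m := min k (B - 1 - k) with hm
  have hB0 : 0 < B := Nat.pos_of_ne_zero (NeZero.ne B)
  have hcdm : q * m ≤ cdist n y := by
    rw [hcd]
    refine le_min ?_ ?_
    · calc q * m ≤ q * k := Nat.mul_le_mul_left q (min_le_left _ _)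
        _ ≤ q * k + r := Nat.le_add_right _ _
    · have hA : q * m ≤ q * (B - 1 - k) := Nat.mul_le_mul_left q (min_le_right _ _)
      have hid : q * (B - 1 - k) + q * k + q = q * B := by
        have : (B - 1 - k) + k + 1 = B := by omega
        calc q * (B - 1 - k) + q * k + q = q * ((B - 1 - k) + k + 1) := by ring
          _ = q * B := by rw [this]
      have hn' : q * B = n := by rw [Nat.mul_comm]; exact hq
      omega
  rcases Nat.eq_zero_or_pos m with hm0 | hm1
  · have h1 : (fhat n H y) ^ 2 ≤ 1 := by
      have := hH.nonneg y; have := hH.le_one y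
      nlinarith
    have h2 : (1:ℝ) ≤ ff k + ff (B - 1 - k) := by
      have e0 : ff 0 = 1 := by norm_num [ff]
      rcases Nat.min_eq_zero_iff.1 (hm ▸ hm0) with h | h
      · rw [h, e0]; linarith [ff_nonneg (B - 1 - 0)]
      · rw [h, e0]; linarith [ff_nonneg k]
    exact h1.trans h2
  · -- m ≥ 1 : decay regime
    have hd0 : (0:ℝ) < cdist n y := by
      have h1 : 0 < q * m := Nat.mul_pos hq0 hm1
      exact_mod_cast lt_of_lt_of_le h1 hcdm
    have hBne : (B:ℝ) ≠ 0 := by positivity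
    have hnBq : (n:ℝ) / B = (q:ℝ) := by
      rw [← hq]; push_cast; exact mul_div_cancel_left₀ _ hBne
    have hdm : (q:ℝ) * m ≤ (cdist n y : ℝ) := by exact_mod_cast hcdm
    have hm1' : (1:ℝ) ≤ (m:ℝ) := by exact_mod_cast hm1
    have hq1 : (1:ℝ) ≤ (q:ℝ) := by exact_mod_cast hq0
    have hdist : (n:ℝ) / B ≤ (cdist n y : ℝ) := by
      rw [hnBq]; nlinarith
    have hdec := hH.decay y hdist
    set d : ℝ := (cdist n y : ℝ) with hd
    have hnR : (n:ℝ) = (B:ℝ) * q := by rw [← hq]; push_cast; ring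
    have hratio : (n:ℝ) / (B * d) = (q:ℝ) / d := by
      rw [hnR, mul_div_mul_left _ _ hBne]
    have hxle : (n:ℝ) / (B * d) ≤ 1 / (m:ℝ) := by
      rw [hratio, div_le_div_iff₀ hd0 (by linarith)]
      nlinarith
    have hxpos : (0:ℝ) ≤ (n:ℝ) / (B * d) := by positivity
    have hcomb : (1/4:ℝ) ^ (F' - 1) * ((n:ℝ) / (B * d)) ^ (F' - 1)
        = ((1/4:ℝ) * ((n:ℝ) / (B * d))) ^ (F' - 1) := (mul_pow _ _ _).symm
    have hbase0 : (0:ℝ) ≤ (1/4:ℝ) * ((n:ℝ) / (B * d)) := by positivity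
    have hinv1 : 1/(m:ℝ) ≤ 1 := by rw [div_le_one (by linarith)]; exact hm1'
    have hbase1 : (1/4:ℝ) * ((n:ℝ) / (B * d)) ≤ 1 := by linarith
    have hpow : ((1/4:ℝ) * ((n:ℝ) / (B * d))) ^ (F' - 1)
        ≤ ((1/4:ℝ) * ((n:ℝ) / (B * d))) ^ 1 :=
      pow_le_pow_of_le_one hbase0 hbase1 (by omega)
    have hfle : fhat n H y ≤ 1 / (4 * m) := by
      have hmne : ((m:ℝ)) ≠ 0 := by linarith
      have heq : (1:ℝ)/(4*(m:ℝ)) = (1/4)*(1/(m:ℝ)) := by field_simp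
      have h4 : (1/4:ℝ) * ((n:ℝ) / (B * d)) ≤ 1 / (4 * m) := by
        rw [heq]
        exact mul_le_mul_of_nonneg_left hxle (by norm_num)
      calc fhat n H y ≤ (1/4:ℝ) ^ (F' - 1) * ((n:ℝ) / (B * d)) ^ (F' - 1) := hdec
        _ = ((1/4:ℝ) * ((n:ℝ) / (B * d))) ^ (F' - 1) := hcomb
        _ ≤ ((1/4:ℝ) * ((n:ℝ) / (B * d))) ^ 1 := hpow
        _ = (1/4:ℝ) * ((n:ℝ) / (B * d)) := pow_one _
        _ ≤ 1 / (4 * m) := h4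
    have hf0 := hH.nonneg y
    have hsq : (fhat n H y) ^ 2 ≤ 1 / (16 * (m:ℝ) ^ 2) := by
      have : (1 / (4 * (m:ℝ))) ^ 2 = 1 / (16 * (m:ℝ)^2) := by
        field_simp; ring
      nlinarith
    have hffm : ff m = 1 / (16 * (m:ℝ) ^ 2) := by
      unfold ff; rw [if_neg (by omega)]
    have : ff m ≤ ff k + ff (B - 1 - k) := by
      rcases min_choice k (B - 1 - k) with h | h
      · rw [hm, h]; have := ff_nonneg (B - 1 - k); linarith
      · rw [hm, h]; have := ff_nonneg k; linarith
    rw [hffm] at this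
    linarith

lemma filter_sum (hBn : B ∣ n) (hF2 : 2 ≤ F') (H : ZMod n → ℝ)
    (hH : IsFlatFilter n B F' H) (g : ZMod n) :
    ∑ b : ZMod B, (fhat n H ((((n / B : ℕ) : ZMod n) * ((b.val : ℕ) : ZMod n)) - g)) ^ 2
      ≤ 3 := by
  have hq : B * (n / B) = n := Nat.mul_div_cancel' hBn
  set q := n / B with hqdef
  have hq0 : 0 < q := Nat.pos_of_ne_zero (NeZero.ne (n/B))
  have hB0 : 0 < B := Nat.pos_of_ne_zero (NeZero.ne B)
  set c0 : ZMod n := -g with hc0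
  set s0 : ℕ := c0.val / q with hs0
  set r0 : ℕ := c0.val % q with hr0
  have hr0q : r0 < q := Nat.mod_lt _ hq0
  have hdm : q * s0 + r0 = c0.val := Nat.div_add_mod c0.val q
  have hMg : ∀ b : ZMod B, (((q : ℕ) : ZMod n) * ((b.val : ℕ) : ZMod n)) - g
      = ((q * b.val + c0.val : ℕ) : ZMod n) := by
    intro b
    rw [Nat.cast_add, Nat.cast_mul, ZMod.natCast_rightInverse c0, hc0, sub_eq_add_neg]
  have hshift : ∀ b : ZMod B, ((q * b.val + c0.val : ℕ) : ZMod n)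
      = ((q * (b + (s0 : ZMod B)).val + r0 : ℕ) : ZMod n) := by
    intro b
    rw [ZMod.natCast_eq_natCast_iff]
    have h1 : (b + (s0 : ZMod B)).val ≡ b.val + s0 [MOD B] := by
      rw [ZMod.val_add, ZMod.val_natCast]
      calc (b.val + s0 % B) % B ≡ b.val + s0 % B [MOD B] := Nat.mod_modEq _ _
        _ ≡ b.val + s0 [MOD B] := Nat.ModEq.add_left _ (Nat.mod_modEq _ _)
    have h2 : q * (b + (s0 : ZMod B)).val ≡ q * (b.val + s0) [MOD q * B] :=
      Nat.ModEq.mul_left' q h1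
    have h3 : q * (b + (s0 : ZMod B)).val + r0 ≡ q * (b.val + s0) + r0 [MOD q * B] :=
      h2.add_right r0
    have hqB : q * B = n := by rw [Nat.mul_comm]; exact hq
    rw [hqB] at h3
    have h4 : q * (b.val + s0) + r0 = q * b.val + c0.val := by
      rw [← hdm]; ring
    rw [h4] at h3
    exact h3.symm
  calc ∑ b : ZMod B, (fhat n H ((((q : ℕ) : ZMod n) * ((b.val : ℕ) : ZMod n)) - g)) ^ 2
      = ∑ b : ZMod B, (fhat n H ((q * (b + (s0 : ZMod B)).val + r0 : ℕ) : ZMod n)) ^ 2 := by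
        refine Finset.sum_congr rfl fun b _ => ?_
        rw [hMg b, hshift b]
    _ = ∑ b : ZMod B, (fhat n H ((q * b.val + r0 : ℕ) : ZMod n)) ^ 2 := by
        exact Fintype.sum_bijective (fun b => b + (s0 : ZMod B))
          (Equiv.addRight ((s0 : ZMod B))).bijective _ _ (fun b => rfl)
    _ = ∑ k ∈ range B, (fhat n H ((q * ((k : ZMod B)).val + r0 : ℕ) : ZMod n)) ^ 2 :=
        sum_univ_zmod B _
    _ ≤ ∑ k ∈ range B, (ff k + ff (B - 1 - k)) := by
        refine Finset.sum_le_sum fun k hk => ?_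
        have hkB : k < B := mem_range.1 hk
        have : ((k : ZMod B)).val = k := ZMod.val_cast_of_lt hkB
        rw [this]
        exact fhat_index_le n B F' hBn hF2 H hH r0 k hr0q hkB
    _ ≤ 3 := by
        rw [Finset.sum_add_distrib, Finset.sum_range_reflect ff B]
        have := ff_sum_le B
        linarith

end

section
variable (n B : ℕ) [NeZero n] [NeZero B] [NeZero (n/B)]

lemma dft_real (H : ZMod n → ℝ) (hre : ∀ f, (dft n (fun t => ((H t : ℝ) : ℂ)) f).im = 0)
    (x : ZMod n) : dft n (fun t => ((H t : ℝ) : ℂ)) x = ((fhat n H x : ℝ) : ℂ) := by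
  apply Complex.ext
  · rfl
  · rw [hre x, Complex.ofReal_im]

lemma hash_W (hBn : B ∣ n) (Y : ZMod n → ℂ) (H : ZMod n → ℝ)
    (hre : ∀ f, (dft n (fun t => ((H t : ℝ) : ℂ)) f).im = 0) (σ Δ : ZMod n) (b : ZMod B) :
    dft B (hashing n B Y (fun t => ((H t : ℝ) : ℂ)) σ Δ) b
      = ∑ f : ZMod n,
          ((fhat n H ((((n / B : ℕ) : ZMod n) * ((b.val : ℕ) : ZMod n)) - σ * f) : ℝ) : ℂ)
            * dft n Y f * (chr n (σ * f * Δ))⁻¹ := by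
  set H' : ZMod n → ℂ := fun t => ((H t : ℝ) : ℂ) with hH'
  set mb : ZMod n := (((n / B : ℕ) : ZMod n) * ((b.val : ℕ) : ZMod n)) with hmb
  rw [hash_dft n B hBn Y H' σ Δ b, ← hmb]
  have hterm : ∀ t : ZMod n, Y (σ * (Δ + t)) * H' t * chr n (mb * t)
      = ∑ f : ZMod n, dft n Y f * (chr n (σ * f * Δ))⁻¹ * (H' t * chr n ((mb - σ * f) * t)) := by
    intro t
    conv_lhs => rw [dft_inv n Y (σ * (Δ + t))]
    rw [Finset.sum_mul, Finset.sum_mul]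
    refine Finset.sum_congr rfl fun f _ => ?_
    have harg : f * (σ * (Δ + t)) = σ * f * Δ + σ * f * t := by ring
    have harg2 : (mb - σ * f) * t = mb * t + -(σ * f * t) := by ring
    rw [harg, chr_add, harg2, chr_add, chr_neg]
    have h1 := chr_ne_zero n (σ * f * Δ)
    have h2 := chr_ne_zero n (σ * f * t)
    field_simp
  calc (n : ℂ)⁻¹ * ∑ t : ZMod n, Y (σ * (Δ + t)) * H' t * chr n (mb * t)
      = (n : ℂ)⁻¹ * ∑ t : ZMod n, ∑ f : ZMod n,
          dft n Y f * (chr n (σ * f * Δ))⁻¹ * (H' t * chr n ((mb - σ * f) * t)) := by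
        congr 1; exact Finset.sum_congr rfl fun t _ => hterm t
    _ = ∑ f : ZMod n, dft n Y f * (chr n (σ * f * Δ))⁻¹
          * ((n : ℂ)⁻¹ * ∑ t : ZMod n, H' t * chr n ((mb - σ * f) * t)) := by
        rw [Finset.sum_comm, Finset.mul_sum]
        refine Finset.sum_congr rfl fun f _ => ?_
        rw [← Finset.mul_sum]
        ring
    _ = ∑ f : ZMod n,
          ((fhat n H (mb - σ * f) : ℝ) : ℂ) * dft n Y f * (chr n (σ * f * Δ))⁻¹ := by
        refine Finset.sum_congr rfl fun f _ => ?_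
        rw [← dft_eq n H' (mb - σ * f), dft_real n H hre (mb - σ * f)]
        ring

lemma sum_Delta (hBn : B ∣ n) (Y : ZMod n → ℂ) (H : ZMod n → ℝ)
    (hre : ∀ f, (dft n (fun t => ((H t : ℝ) : ℂ)) f).im = 0) (σ : ZMod n)
    (hσ : IsUnit σ) (b : ZMod B) :
    ∑ Δ : ZMod n, ‖dft B (hashing n B Y (fun t => ((H t : ℝ) : ℂ)) σ Δ) b‖ ^ 2
      = (n : ℝ) * ∑ f : ZMod n,
          (fhat n H ((((n / B : ℕ) : ZMod n) * ((b.val : ℕ) : ZMod n)) - σ * f)) ^ 2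
            * ‖dft n Y f‖ ^ 2 := by
  set mb : ZMod n := (((n / B : ℕ) : ZMod n) * ((b.val : ℕ) : ZMod n)) with hmb
  set coef : ZMod n → ℂ :=
    fun f => ((fhat n H (mb - σ * f) : ℝ) : ℂ) * dft n Y f with hcoef
  apply Complex.ofReal_injective
  push_cast
  have hW : ∀ Δ : ZMod n,
      ((‖dft B (hashing n B Y (fun t => ((H t : ℝ) : ℂ)) σ Δ) b‖ : ℝ) : ℂ) ^ 2
        = (∑ f : ZMod n, coef f * (chr n (σ * f * Δ))⁻¹)
          * (starRingEnd ℂ) (∑ f : ZMod n, coef f * (chr n (σ * f * Δ))⁻¹) := by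
    intro Δ
    rw [← hash_W n B hBn Y H hre σ Δ b]
    rw [← Complex.ofReal_pow, Complex.sq_norm, Complex.mul_conj]
  calc ∑ Δ : ZMod n,
        ((‖dft B (hashing n B Y (fun t => ((H t : ℝ) : ℂ)) σ Δ) b‖ : ℝ) : ℂ) ^ 2
      = ∑ Δ : ZMod n, ∑ f : ZMod n, ∑ g : ZMod n,
          coef f * (starRingEnd ℂ) (coef g) * chr n ((σ * (g - f)) * Δ) := by
        refine Finset.sum_congr rfl fun Δ _ => ?_
        rw [hW Δ, map_sum, Finset.sum_mul_sum]
        refine Finset.sum_congr rfl fun f _ => Finset.sum_congr rfl fun g _ => ?_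
        rw [map_mul, map_inv₀, conj_chr, inv_inv]
        have harg : σ * g * Δ = (σ * (g - f)) * Δ + σ * f * Δ := by ring
        rw [harg, chr_add]
        have h1 := chr_ne_zero n (σ * f * Δ)
        field_simp
    _ = ∑ f : ZMod n, ∑ g : ZMod n,
          coef f * (starRingEnd ℂ) (coef g) * ∑ Δ : ZMod n, chr n ((σ * (g - f)) * Δ) := by
        rw [Finset.sum_comm]
        refine Finset.sum_congr rfl fun f _ => ?_
        rw [Finset.sum_comm]
        exact Finset.sum_congr rfl fun g _ => (Finset.mul_sum _ _ _).symm
    _ = ∑ f : ZMod n, coef f * (starRingEnd ℂ) (coef f) * (n : ℂ) := by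
        refine Finset.sum_congr rfl fun f _ => ?_
        rw [Finset.sum_eq_single f]
        · rw [sum_chr n (σ * (f - f))]
          simp
        · intro g _ hg
          rw [sum_chr n (σ * (g - f))]
          rw [if_neg, mul_zero]
          intro h0
          exact hg (sub_eq_zero.1 (hσ.mul_right_eq_zero.1 h0))
        · intro h; exact absurd (mem_univ f) h
    _ = (n : ℂ) * ∑ f : ZMod n,
          ((fhat n H (mb - σ * f) : ℝ) : ℂ) ^ 2 * ((‖dft n Y f‖ : ℝ) : ℂ) ^ 2 := by
        rw [Finset.mul_sum]
        refine Finset.sum_congr rfl fun f _ => ?_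
        rw [Complex.mul_conj, hcoef]
        have : Complex.normSq (((fhat n H (mb - σ * f) : ℝ) : ℂ) * dft n Y f)
            = (fhat n H (mb - σ * f)) ^ 2 * (‖dft n Y f‖) ^ 2 := by
          rw [map_mul, Complex.normSq_ofReal, ← Complex.sq_norm]
          ring
        rw [this]
        push_cast
        ring


end
end EH

open EH in
/-- Exact hashing, part 2: for uniformly random odd `σ` and uniformly random `Δ`,
`E_{σ,Δ}[ ‖Û‖₂² ] ≤ 3‖Ŷ‖₂²`. -/
theorem exact_hashing_total_energy (n B F' : ℕ) [NeZero n] [NeZero B]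
    [NeZero (n / B)]
    (hn : ∃ k, n = 2 ^ k) (hB : ∃ k, B = 2 ^ k) (hBn : B ∣ n)
    (δ : ℝ) (hδ : δ ∈ Set.Ioo (0 : ℝ) (1 / 20))
    (hF' : 10 * Real.logb 2 (1 / δ) ≤ (F' : ℝ))
    (Y : ZMod n → ℂ) (H : ZMod n → ℝ) (hH : IsFlatFilter n B F' H) :
    (((odds n).card : ℝ) * n)⁻¹ *
        ∑ σ ∈ odds n, ∑ Δ : ZMod n,
          ∑ b : ZMod B,
            ‖dft B (hashing n B Y (fun t => ((H t : ℝ) : ℂ)) σ Δ) b‖ ^ 2 ≤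
      3 * ∑ f : ZMod n, ‖dft n Y f‖ ^ 2 := by
  obtain ⟨k, hnk⟩ := hn
  have hδ0 := hδ.1
  have hδ1 := hδ.2
  -- F' ≥ 2
  have hF2 : 2 ≤ F' := by
    have h16 : (16:ℝ) ≤ 1/δ := by
      rw [le_div_iff₀ hδ0]; nlinarith
    have hlog : (4:ℝ) ≤ Real.logb 2 (1/δ) := by
      have h1 : Real.logb 2 16 ≤ Real.logb 2 (1/δ) :=
        (Real.logb_le_logb (by norm_num) (by norm_num) (by positivity)).2 h16
      have h2 : Real.logb 2 16 = 4 := by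
        have : (16:ℝ) = 2 ^ (4:ℕ) := by norm_num
        rw [this, Real.logb_pow, Real.logb_self_eq_one (by norm_num)]
        norm_num
      linarith
    have h40 : (40:ℝ) ≤ (F':ℝ) := by linarith
    have : (2:ℝ) ≤ (F':ℝ) := by linarith
    exact_mod_cast this
  have hre := hH.realFT
  set H' : ZMod n → ℂ := fun t => ((H t : ℝ) : ℂ) with hH'
  set T := ∑ f : ZMod n, ‖dft n Y f‖ ^ 2 with hT
  have hT0 : (0:ℝ) ≤ T := Finset.sum_nonneg fun f _ => by positivity
  have hn0 : 0 < n := Nat.pos_of_ne_zero (NeZero.ne n)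
  -- every σ ∈ odds n is a unit
  have hunit : ∀ σ ∈ odds n, IsUnit σ := by
    intro σ hσ
    simp only [odds, Finset.mem_filter] at hσ
    have hodd : σ.val % 2 = 1 := hσ.2
    have hcop2 : Nat.Coprime σ.val 2 := by
      have : Nat.gcd σ.val 2 = 1 := by
        rw [Nat.gcd_comm, Nat.gcd_rec, hodd]
        simp
      exact this
    have hcop : Nat.Coprime σ.val n := by
      have h2 := hcop2.pow_right k
      rwa [← hnk] at h2
    have hu := (ZMod.isUnit_iff_coprime σ.val n).2 hcop
    rwa [ZMod.natCast_rightInverse σ] at hu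
  -- per-σ bound
  have hbound : ∀ σ ∈ odds n,
      ∑ Δ : ZMod n, ∑ b : ZMod B,
        ‖dft B (hashing n B Y H' σ Δ) b‖ ^ 2 ≤ 3 * (n : ℝ) * T := by
    intro σ hσ
    rw [Finset.sum_comm]
    calc ∑ b : ZMod B, ∑ Δ : ZMod n,
          ‖dft B (hashing n B Y H' σ Δ) b‖ ^ 2
        = ∑ b : ZMod B, (n : ℝ) * ∑ f : ZMod n,
            (fhat n H ((((n / B : ℕ) : ZMod n) * ((b.val : ℕ) : ZMod n)) - σ * f)) ^ 2
              * ‖dft n Y f‖ ^ 2 :=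
          Finset.sum_congr rfl fun b _ =>
            sum_Delta n B hBn Y H hre σ (hunit σ hσ) b
      _ = (n : ℝ) * ∑ f : ZMod n, (∑ b : ZMod B,
            (fhat n H ((((n / B : ℕ) : ZMod n) * ((b.val : ℕ) : ZMod n)) - σ * f)) ^ 2)
              * ‖dft n Y f‖ ^ 2 := by
          rw [← Finset.mul_sum, Finset.sum_comm]
          congr 1
          refine Finset.sum_congr rfl fun f _ => ?_
          rw [Finset.sum_mul]
      _ ≤ (n : ℝ) * ∑ f : ZMod n, 3 * ‖dft n Y f‖ ^ 2 := by
          refine mul_le_mul_of_nonneg_left (Finset.sum_le_sum fun f _ => ?_) (by positivity)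
          exact mul_le_mul_of_nonneg_right
            (filter_sum n B F' hBn hF2 H hH (σ * f)) (by positivity)
      _ = 3 * (n : ℝ) * T := by
          rw [← Finset.mul_sum, ← hT]; ring
  have hsum : ∑ σ ∈ odds n, ∑ Δ : ZMod n, ∑ b : ZMod B,
      ‖dft B (hashing n B Y H' σ Δ) b‖ ^ 2
        ≤ ((odds n).card : ℝ) * (3 * (n : ℝ) * T) := by
    calc ∑ σ ∈ odds n, ∑ Δ : ZMod n, ∑ b : ZMod B,
          ‖dft B (hashing n B Y H' σ Δ) b‖ ^ 2
        ≤ ∑ _σ ∈ odds n, 3 * (n : ℝ) * T := Finset.sum_le_sum hbound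
      _ = ((odds n).card : ℝ) * (3 * (n : ℝ) * T) := by
          rw [Finset.sum_const, nsmul_eq_mul]
  rcases Nat.eq_zero_or_pos (odds n).card with hc | hc
  · have hempty : odds n = ∅ := Finset.card_eq_zero.1 hc
    rw [hempty]
    simp
    positivity
  · have hcne : ((odds n).card : ℝ) ≠ 0 := by positivity
    have hnne : (n : ℝ) ≠ 0 := by positivity
    calc (((odds n).card : ℝ) * n)⁻¹ *
          ∑ σ ∈ odds n, ∑ Δ : ZMod n, ∑ b : ZMod B,
            ‖dft B (hashing n B Y H' σ Δ) b‖ ^ 2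
        ≤ (((odds n).card : ℝ) * n)⁻¹ * (((odds n).card : ℝ) * (3 * (n : ℝ) * T)) :=
          mul_le_mul_of_nonneg_left hsum (by positivity)
      _ = 3 * T := by
          field_simp
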